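/- arXiv:math/0409594 — 3 statements merged into one kernel-verified Lean document; each statement's English description precedes it below -/
import Mathlib

section
/- Let F(x) = ax^4 + bx^3 + cx^2 + dx with a > 0. Let A(y) and B(y) denote the largest and smallest real roots of F(x) = y for y sufficiently large (so F(A(y)) = F(B(y)) = y with A(y) > 0 > B(y)). Then lim_{y → +∞} (A(y) + B(y)) = -b/(2a). -/
open Filter

lemma key_bound_aux (a b c d s p : ℝ) (ha : 0 < a) (hp : p ≤ -1)
    (hE : a*s*(s^2-2*p) + b*(s^2-p) + c*s + d = 0) :
    |s + b/(2*a)| ≤ (|b|/2*((|b|+|c|+|d|)/a)^2 + |c| *((|b|+|c|+|d|)/a) + |d|) / (a*(-2*p)) := by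
  have hQ2 : s^2 + 2 ≤ s^2 - 2*p := by linarith
  have hQpos : 0 < s^2 - 2*p := by nlinarith [sq_nonneg s]
  have hs : |s| ≤ (|b|+|c|+|d|)/a := by
    have h1 : a*|s| *(s^2-2*p) ≤ (|b|+|c|+|d|)*(s^2-2*p) := by
      rcases abs_cases s with ⟨h,hs0⟩|⟨h,hs0⟩ <;> rw [h] <;>
        nlinarith [le_abs_self b, neg_abs_le b, le_abs_self c, neg_abs_le c,
          le_abs_self d, neg_abs_le d, abs_nonneg b, abs_nonneg c, abs_nonneg d,
          sq_nonneg (s-1), sq_nonneg (s+1)]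
    have h2 := le_of_mul_le_mul_right h1 hQpos
    rw [le_div_iff₀ ha]
    linarith
  have hid : a*(s^2-2*p)*(s + b/(2*a)) = -(b/2*s^2 + c*s + d) := by
    field_simp
    linear_combination 2*hE
  set S0 := (|b|+|c|+|d|)/a with hS0
  have hS0nn : 0 ≤ S0 := by positivity
  have hssq : s^2 ≤ S0^2 := by
    rw [← sq_abs s]
    exact pow_le_pow_left₀ (abs_nonneg s) hs 2
  have habs : a*(s^2-2*p)*|s + b/(2*a)| ≤ |b|/2*S0^2 + |c| *S0 + |d| := by
    have e1 : |a*(s^2-2*p)*(s+b/(2*a))| = |b/2*s^2+c*s+d| := by rw [hid, abs_neg]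
    rw [abs_mul, abs_mul, abs_of_pos ha, abs_of_pos hQpos] at e1
    rw [e1]
    calc |b/2*s^2+c*s+d| ≤ |b/2*s^2| + |c*s| + |d| := abs_add_three _ _ _
      _ = |b|/2*s^2 + |c| *|s| + |d| := by
          rw [abs_mul, abs_mul, abs_div, abs_two, abs_of_nonneg (sq_nonneg s)]
      _ ≤ |b|/2*S0^2 + |c| *S0 + |d| := by
          have u1 := mul_le_mul_of_nonneg_left hssq (by positivity : (0:ℝ) ≤ |b|/2)
          have u2 := mul_le_mul_of_nonneg_left hs (abs_nonneg c)
          linarith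
  have hKnn : 0 ≤ |b|/2*S0^2 + |c| *S0 + |d| := by positivity
  have hden : 0 < a*(-2*p) := by nlinarith
  rw [le_div_iff₀ hden]
  have hX : 0 ≤ |s + b/(2*a)| := abs_nonneg _
  nlinarith [mul_le_mul_of_nonneg_left (show a*(-2*p) ≤ a*(s^2-2*p) by nlinarith [sq_nonneg s]) hX]

/-- For `F x = a x^4 + b x^3 + c x^2 + d x` with `a > 0`, if `A y` and `B y` are the
positive and negative solutions of `F x = y` for large `y`, then `A y + B y → -b/(2a)`. -/
theorem stmt_0 (a b c d : ℝ) (ha : 0 < a)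
    (F : ℝ → ℝ) (hF : ∀ x, F x = a * x ^ 4 + b * x ^ 3 + c * x ^ 2 + d * x)
    (A B : ℝ → ℝ)
    (hAB : ∀ᶠ y in atTop, F (A y) = y ∧ F (B y) = y ∧ 0 < A y ∧ B y < 0) :
    Tendsto (fun y => A y + B y) atTop (nhds (-b / (2 * a))) := by
  have hFc : Continuous F := by
    have hFe : F = fun x => a * x ^ 4 + b * x ^ 3 + c * x ^ 2 + d * x := funext hF
    rw [hFe]; continuity
  -- A tends to +infinity
  have hA : Tendsto A atTop atTop := by
    rw [tendsto_atTop]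
    intro M
    obtain ⟨C, hC⟩ := (isCompact_Icc (a := (0:ℝ)) (b := max M 0)).exists_bound_of_continuousOn
      hFc.continuousOn
    filter_upwards [hAB, eventually_gt_atTop (|C|)] with y hy hyC
    by_contra h
    push_neg at h
    have hmem : A y ∈ Set.Icc (0:ℝ) (max M 0) :=
      ⟨hy.2.2.1.le, le_max_of_le_left h.le⟩
    have hb := hC _ hmem
    rw [hy.1] at hb
    have : y ≤ |y| := le_abs_self y
    rw [Real.norm_eq_abs] at hb
    have hCle : |C| ≥ C := le_abs_self C
    linarith [le_trans (le_abs_self y) hb]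
  -- B tends to -infinity
  have hB : Tendsto B atTop atBot := by
    rw [tendsto_atBot]
    intro M
    obtain ⟨C, hC⟩ := (isCompact_Icc (a := min M 0) (b := (0:ℝ))).exists_bound_of_continuousOn
      hFc.continuousOn
    filter_upwards [hAB, eventually_gt_atTop (|C|)] with y hy hyC
    by_contra h
    push_neg at h
    have hmem : B y ∈ Set.Icc (min M 0) (0:ℝ) :=
      ⟨le_of_lt (lt_of_le_of_lt (min_le_left M 0) h), hy.2.2.2.le⟩
    have hb := hC _ hmem
    rw [hy.2.1] at hb
    rw [Real.norm_eq_abs] at hb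
    linarith [le_trans (le_abs_self y) hb, le_abs_self C]
  -- product tends to -infinity
  have hprod : Tendsto (fun y => A y * B y) atTop atBot := hA.atTop_mul_atBot₀ hB
  set S0 := (|b|+|c|+|d|)/a with hS0
  set K := |b|/2*S0^2 + |c| *S0 + |d| with hK
  -- denominator tends to +infinity
  have hden : Tendsto (fun y => a*(-2*(A y * B y))) atTop atTop :=
    ((tendsto_neg_atBot_atTop.comp hprod).const_mul_atTop
      (by positivity : (0:ℝ) < 2*a)).congr (fun y => by simp [Function.comp]; ring)
  have hg : Tendsto (fun y => K / (a*(-2*(A y * B y)))) atTop (nhds 0) :=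
    Tendsto.div_atTop tendsto_const_nhds hden
  have hsq : ∀ᶠ y in atTop, ‖A y + B y - (-b/(2*a))‖ ≤ K / (a*(-2*(A y * B y))) := by
    filter_upwards [hAB, hprod.eventually (eventually_le_atBot (-1:ℝ))] with y hy hpy
    have h1 : a * (A y) ^ 4 + b * (A y) ^ 3 + c * (A y) ^ 2 + d * (A y)
        = a * (B y) ^ 4 + b * (B y) ^ 3 + c * (B y) ^ 2 + d * (B y) := by
      rw [← hF (A y), ← hF (B y), hy.1, hy.2.1]
    have hne : A y - B y ≠ 0 := by
      have := hy.2.2.1; have := hy.2.2.2; intro h; linarith [sub_eq_zero.mp h]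
    have h2 : (A y - B y) * (a*(A y + B y)*((A y + B y)^2 - 2*(A y * B y))
        + b*((A y + B y)^2 - (A y * B y)) + c*(A y + B y) + d) = 0 := by
      linear_combination h1
    have hE := (mul_eq_zero.mp h2).resolve_left hne
    have := key_bound_aux a b c d (A y + B y) (A y * B y) ha hpy hE
    rw [Real.norm_eq_abs]
    have heq : A y + B y - (-b/(2*a)) = A y + B y + b/(2*a) := by ring
    rw [heq]
    exact this
  have hfinal := squeeze_zero_norm' hsq hg
  exact tendsto_sub_nhds_zero_iff.mp hfinal
end

section
/- For the 4-dimensional Hamiltonian system ẋ = y - F(x), ẏ = -x, ż = w - F'(x) z, ẇ = -z with F(x) = x², the function Φ(x, y, z, w) = (y - x² + 1/2) e^{-2y} has identically vanishing derivative along the vector field; i.e., it is a first integral. -/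
/-- For the 4-dimensional system `ẋ = y - x²`, `ẏ = -x`, `ż = w - 2xz`, `ẇ = -z`,
the function `Φ (x, y, z, w) = (y - x² + 1/2) e^{-2y}` is a first integral: its derivative
along every solution vanishes identically. -/
theorem stmt_3 (Φ : ℝ → ℝ → ℝ → ℝ → ℝ)
    (hΦ : ∀ x y z w, Φ x y z w = (y - x ^ 2 + 1 / 2) * Real.exp (-2 * y))
    (x y z w : ℝ → ℝ)
    (hx : ∀ t, HasDerivAt x (y t - (x t) ^ 2) t)
    (hy : ∀ t, HasDerivAt y (-(x t)) t)
    (hz : ∀ t, HasDerivAt z (w t - 2 * x t * z t) t)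
    (hw : ∀ t, HasDerivAt w (-(z t)) t) :
    ∀ t : ℝ, HasDerivAt (fun s => Φ (x s) (y s) (z s) (w s)) 0 t := by
  intro t
  have h1 : HasDerivAt (fun s => y s - (x s) ^ 2 + 1 / 2)
      (-(x t) - 2 * (x t) * (y t - (x t) ^ 2)) t := by
    have := ((hy t).sub (((hx t).pow 2))).add_const (1/2 : ℝ)
    refine this.congr_deriv ?_
    norm_num
  have h2 : HasDerivAt (fun s => Real.exp (-2 * y s))
      (Real.exp (-2 * y t) * (-2 * -(x t))) t := by
    exact (HasDerivAt.exp ((hy t).const_mul (-2)))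
  have h3 := h1.mul h2
  have : (fun s => Φ (x s) (y s) (z s) (w s)) =
      fun s => (y s - (x s) ^ 2 + 1 / 2) * Real.exp (-2 * y s) := by
    funext s; rw [hΦ]
  rw [this]
  refine h3.congr_deriv ?_
  ring
end

section
/- For a ≠ 0 and ε > 0, the system ẋ = y - x², ẏ = ε(a - x) has no nonconstant periodic orbits. -/
/-- A monotone periodic function is constant. -/
lemma per_mono_const (f : ℝ → ℝ) (hf : Monotone f) (T : ℝ) (hT : 0 < T)
    (hp : ∀ t, f (t + T) = f t) : ∀ t, f t = f 0 := by
  have hn : ∀ n : ℕ, ∀ t, f (t + n * T) = f t := by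
    intro n
    induction n with
    | zero => intro t; simp
    | succ k ih =>
      intro t
      have : t + (k + 1 : ℕ) * T = (t + k * T) + T := by push_cast; ring
      rw [this, hp, ih]
  intro t
  obtain ⟨n, hn'⟩ := exists_nat_ge (|t| / T)
  have habs : |t| ≤ n * T := by
    rw [div_le_iff₀ hT] at hn'; linarith
  have h1 : t ≤ n * T := le_trans (le_abs_self t) habs
  have h2 : -(n * T) ≤ t := by
    have := neg_abs_le t; linarith
  have e1 : f ((n : ℝ) * T) = f 0 := by
    have := hn n 0; simpa using this
  have e2 : f (-((n : ℝ) * T)) = f 0 := by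
    have := hn n (-((n : ℝ) * T)); simpa using this.symm
  have le1 : f t ≤ f 0 := e1 ▸ hf h1
  have le2 : f 0 ≤ f t := e2 ▸ hf h2
  linarith

/-- For `a ≠ 0` and `ε > 0`, the system `ẋ = y - x²`, `ẏ = ε (a - x)` has no nonconstant
periodic orbits: every periodic solution is constant. -/
theorem stmt_11 (a ε : ℝ) (ha : a ≠ 0) (hε : 0 < ε)
    (x y : ℝ → ℝ)
    (hx : ∀ t, HasDerivAt x (y t - (x t) ^ 2) t)
    (hy : ∀ t, HasDerivAt y (ε * (a - x t)) t)
    (T : ℝ) (hT : 0 < T)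
    (hper : ∀ t, x (t + T) = x t ∧ y (t + T) = y t) :
    ∀ t : ℝ, x t = x 0 ∧ y t = y 0 := by
  have hεne : ε ≠ 0 := ne_of_gt hε
  set c : ℝ := if 0 < a then 1 else -1 with hc
  have hca : 0 < c * a := by
    by_cases h : 0 < a
    · simp [hc, h]
    · have : a < 0 := lt_of_le_of_ne (not_lt.mp h) ha
      simp only [hc, if_neg h]
      nlinarith
  -- the Lyapunov function
  set h : ℝ → ℝ := fun t =>
    c * (Real.exp (-2 * (y t - a ^ 2) / ε) * ((y t - a ^ 2) - (x t - a) ^ 2 + ε / 2)) with hhdef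
  have hd : ∀ t, HasDerivAt h
      (c * (4 * a * Real.exp (-2 * (y t - a ^ 2) / ε) * (x t - a) ^ 2)) t := by
    intro t
    have hv : HasDerivAt (fun t => y t - a ^ 2) (ε * (a - x t)) t := (hy t).sub_const _
    have hexp : HasDerivAt (fun t => Real.exp (-2 * (y t - a ^ 2) / ε))
        (Real.exp (-2 * (y t - a ^ 2) / ε) * (-2 * (ε * (a - x t)) / ε)) t := by
      have h1 : HasDerivAt (fun t => -2 * (y t - a ^ 2) / ε)
          (-2 * (ε * (a - x t)) / ε) t := (hv.const_mul (-2)).div_const ε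
      simpa [mul_comm] using h1.exp
    have hu2 : HasDerivAt (fun t => (x t - a) ^ 2)
        (2 * (x t - a) ^ 1 * (y t - (x t) ^ 2)) t := ((hx t).sub_const a).pow 2
    have hpoly : HasDerivAt (fun t => (y t - a ^ 2) - (x t - a) ^ 2 + ε / 2)
        (ε * (a - x t) - 2 * (x t - a) ^ 1 * (y t - (x t) ^ 2)) t :=
      (hv.sub hu2).add_const _
    have hprod := (hexp.mul hpoly).const_mul c
    refine hprod.congr_deriv ?_
    have hεε : -2 * (ε * (a - x t)) / ε = -2 * (a - x t) := by
      rw [mul_div_assoc, mul_div_cancel_left₀ _ hεne]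
    rw [hεε]
    ring
  have hmono : Monotone h := by
    apply monotone_of_deriv_nonneg (fun t => (hd t).differentiableAt)
    intro t
    rw [(hd t).deriv]
    nlinarith [Real.exp_pos (-2 * (y t - a ^ 2) / ε), sq_nonneg (x t - a), hca,
      mul_nonneg (mul_nonneg (le_of_lt hca) (le_of_lt (Real.exp_pos (-2 * (y t - a ^ 2) / ε)))) (sq_nonneg (x t - a))]
  have hhper : ∀ t, h (t + T) = h t := by
    intro t
    simp only [hhdef, (hper t).1, (hper t).2]
  have hconst := per_mono_const h hmono T hT hhper
  have hd0 : ∀ t, c * (4 * a * Real.exp (-2 * (y t - a ^ 2) / ε) * (x t - a) ^ 2) = 0 := by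
    intro t
    have : h = fun _ => h 0 := funext hconst
    have h0 : HasDerivAt h 0 t := by rw [this]; exact hasDerivAt_const t (h 0)
    exact (hd t).unique h0
  have hxa : ∀ t, x t = a := by
    intro t
    have := hd0 t
    have hexp : Real.exp (-2 * (y t - a ^ 2) / ε) > 0 := Real.exp_pos _
    have hsq : (x t - a) ^ 2 = 0 := by
      by_contra hne
      have : (x t - a) ^ 2 > 0 := lt_of_le_of_ne (sq_nonneg _) (Ne.symm hne)
      nlinarith [hca, mul_pos (mul_pos hca hexp) this]
    have := (pow_eq_zero_iff two_ne_zero).mp hsq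
    linarith [sub_eq_zero.mp this]
  have hya : ∀ t, y t = a ^ 2 := by
    intro t
    have hx0 : HasDerivAt x 0 t := by
      have : x = fun _ => a := funext hxa
      rw [this]; exact hasDerivAt_const t a
    have := (hx t).unique hx0
    rw [hxa t] at this
    linarith
  intro t
  rw [hxa t, hxa 0, hya t, hya 0]
  exact ⟨rfl, rfl⟩
end
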